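/- arXiv:2505.03078 — 7 statements merged into one kernel-verified Lean document; each statement's English description precedes it below -/
import Mathlib

section
/- In the coevolutionary model with homogeneous coordinating agents (ε = +1, λ ∈ (0,1), β ∈ (0,1), row-stochastic W and A), the consensus configuration z* with x_i* = 1 and y_i* = 1 for all i is a Nash equilibrium: for every agent i, the payoff f_i((x_i, y_i), z*_{-i}) given in equation (8) with all other agents at (1,1) is maximized over (x_i, y_i) ∈ {−1,+1}×[−1,1] at (x_i, y_i) = (1, 1). -/
/-- With homogeneous coordinating agents, the all-ones consensus
is a Nash equilibrium: with all other agents at `(1,1)`, the payoff of agent `i`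
is maximized over `{-1,+1} × [-1,1]` at `(1,1)`. -/
theorem consensus_is_nash_coordinating
    (n : ℕ) (a w : Fin n → ℝ) (lam β α : ℝ)
    (ha : ∀ j, 0 ≤ a j) (hw : ∀ j, 0 ≤ w j)
    (hasum : ∑ j, a j = 1) (hwsum : ∑ j, w j = 1)
    (hlam : lam ∈ Set.Ioo (0 : ℝ) 1) (hβ : β ∈ Set.Ioo (0 : ℝ) 1) (hα : 0 ≤ α)
    (f : ℝ → ℝ → ℝ)
    (hf : ∀ xi yi : ℝ, f xi yi =
      (lam * (1 - β) / 4) * ∑ j, a j * ((1 - xi) * (1 - 1) + (1 + α) * (1 + 1) * (1 + xi))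
      - (1 / 2) * (1 - lam) * β * ∑ j, w j * (yi - 1) ^ 2
      - (1 / 2) * lam * β * (yi - xi) ^ 2) :
    ∀ xi : ℝ, (xi = 1 ∨ xi = -1) → ∀ yi ∈ Set.Icc (-1 : ℝ) 1,
      f xi yi ≤ f 1 1 := by
  have e : ∀ C : ℝ, (∑ j, a j * C) = C := fun C => by
    rw [← Finset.sum_mul, hasum, one_mul]
  have e2 : ∀ C : ℝ, (∑ j, w j * C) = C := fun C => by
    rw [← Finset.sum_mul, hwsum, one_mul]
  intro xi hxi yi hyi
  obtain ⟨hy1, hy2⟩ := hyi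
  obtain ⟨hl1, hl2⟩ := hlam
  obtain ⟨hb1, hb2⟩ := hβ
  rw [hf, hf, e, e, e2, e2]
  rcases hxi with h | h <;> subst h <;>
    nlinarith [mul_nonneg (mul_nonneg (sub_pos.mpr hl2).le hb1.le) (sq_nonneg (yi - 1)),
      mul_nonneg (mul_nonneg hl1.le hb1.le) (sq_nonneg (yi + 1)),
      mul_nonneg (mul_nonneg hl1.le (sub_pos.mpr hb2).le) hα,
      mul_pos hl1 (sub_pos.mpr hb2)]
end

section
/- Let p = 2λβ(1−λ) and q = 2λ(1−β) with λ, β ∈ (0,1). Suppose W is row-stochastic, y_j ∈ (0,1] for j ∈ S, y_k ∈ [−1,0) for k ∈ V∖S, x_j = +1 for j ∈ S, x_k = −1 for k ∉ S, and Σ_{j∈S} w_{ij} ≥ 1 − q/(2(p+q)) for a given i ∈ S. Then δ_i := p·[Σ_{j∈S} w_{ij} y_j + Σ_{k∉S} w_{ik} y_k] + (q/2)·[Σ_{j∈S} w_{ij} − Σ_{k∉S} w_{ik}] ≥ 0. -/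
/-- Key inequality for consensus from polarization (coordinating
agents): if `∑_{j∈S} w j ≥ 1 - q/(2(p+q))`, the discriminant is nonnegative. -/
theorem discriminant_nonneg_in_S
    (n : ℕ) (w : Fin n → ℝ) (y : Fin n → ℝ) (S : Finset (Fin n)) (lam β : ℝ)
    (hlam : lam ∈ Set.Ioo (0 : ℝ) 1) (hβ : β ∈ Set.Ioo (0 : ℝ) 1)
    (hw : ∀ j, 0 ≤ w j) (hwsum : ∑ j, w j = 1)
    (hyS : ∀ j ∈ S, y j ∈ Set.Ioc (0 : ℝ) 1)
    (hyNS : ∀ k ∉ S, y k ∈ Set.Ico (-1 : ℝ) 0)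
    (hcoh : 1 - (2 * lam * (1 - β)) /
        (2 * (2 * lam * β * (1 - lam) + 2 * lam * (1 - β))) ≤ ∑ j ∈ S, w j) :
    0 ≤ (2 * lam * β * (1 - lam)) *
          (∑ j ∈ S, w j * y j + ∑ k ∈ Sᶜ, w k * y k)
        + (2 * lam * (1 - β) / 2) * (∑ j ∈ S, w j - ∑ k ∈ Sᶜ, w k) := by
  obtain ⟨hl0, hl1⟩ := hlam
  obtain ⟨hb0, hb1⟩ := hβ
  set p := 2 * lam * β * (1 - lam) with hp
  set q := 2 * lam * (1 - β) with hq
  have hlm : 0 < 1 - lam := by linarith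
  have hbm : 0 < 1 - β := by linarith
  have hp0 : 0 < p := by rw [hp]; positivity
  have hq0 : 0 < q := by rw [hq]; positivity
  set s := ∑ j ∈ S, w j with hs
  have hsplit : s + ∑ k ∈ Sᶜ, w k = 1 := by
    rw [hs, Finset.sum_add_sum_compl]; exact hwsum
  have h1 : (0:ℝ) ≤ ∑ j ∈ S, w j * y j :=
    Finset.sum_nonneg fun j hj => mul_nonneg (hw j) (le_of_lt (hyS j hj).1)
  have h2 : -(∑ k ∈ Sᶜ, w k) ≤ ∑ k ∈ Sᶜ, w k * y k := by
    rw [← Finset.sum_neg_distrib]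
    apply Finset.sum_le_sum
    intro k hk
    have := (hyNS k (Finset.mem_compl.mp hk)).1
    nlinarith [hw k]
  have ht : 1 - q / (2 * (p + q)) ≤ s := hcoh
  have ht' : 1 - s ≤ q / (2 * (p + q)) := by linarith
  have hpq : 0 < 2 * (p + q) := by linarith
  have ht'' : (1 - s) * (2 * (p + q)) ≤ q := (le_div_iff₀ hpq).mp ht'
  nlinarith [mul_le_mul_of_nonneg_left h2 (le_of_lt hp0),
    mul_le_mul_of_nonneg_left h1 (le_of_lt hp0)]
end

section
/- Let p = 2λβ(1−λ) and q = 2λ(1−β) with λ, β ∈ (0,1). Suppose W is row-stochastic, y_j ∈ (0,1] for j ∈ S, y_k ∈ [−1,0) for k ∈ V∖S, and for a given i ∈ V∖S it holds Σ_{k∈V∖S} w_{ik} < q/(2(p+q)). Then δ_i := p·[Σ_{j∈S} w_{ij} y_j + Σ_{k∉S} w_{ik} y_k] + (q/2)·[Σ_{j∈S} w_{ij} − Σ_{k∉S} w_{ik}] > 0. -/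
/-- Key inequality for consensus from polarization (coordinating
agents), agent outside `S`: if `∑_{k∉S} w k < q/(2(p+q))`, the discriminant is
strictly positive. -/
theorem discriminant_pos_outside_S
    (n : ℕ) (w : Fin n → ℝ) (y : Fin n → ℝ) (S : Finset (Fin n)) (lam β : ℝ)
    (hlam : lam ∈ Set.Ioo (0 : ℝ) 1) (hβ : β ∈ Set.Ioo (0 : ℝ) 1)
    (hw : ∀ j, 0 ≤ w j) (hwsum : ∑ j, w j = 1)
    (hyS : ∀ j ∈ S, y j ∈ Set.Ioc (0 : ℝ) 1)
    (hyNS : ∀ k ∉ S, y k ∈ Set.Ico (-1 : ℝ) 0)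
    (hdiff : ∑ k ∈ Sᶜ, w k <
      (2 * lam * (1 - β)) / (2 * (2 * lam * β * (1 - lam) + 2 * lam * (1 - β)))) :
    0 < (2 * lam * β * (1 - lam)) *
          (∑ j ∈ S, w j * y j + ∑ k ∈ Sᶜ, w k * y k)
        + (2 * lam * (1 - β) / 2) * (∑ j ∈ S, w j - ∑ k ∈ Sᶜ, w k) := by
  obtain ⟨hl0, hl1⟩ := hlam
  obtain ⟨hb0, hb1⟩ := hβ
  set p := 2 * lam * β * (1 - lam) with hp
  set q := 2 * lam * (1 - β) with hq
  have hp0 : 0 < p := mul_pos (mul_pos (mul_pos two_pos hl0) hb0) (by linarith)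
  have hq0 : 0 < q := mul_pos (mul_pos two_pos hl0) (by linarith)
  have hab : ∑ j ∈ S, w j + ∑ k ∈ Sᶜ, w k = 1 := by
    rw [Finset.sum_add_sum_compl]; exact hwsum
  have h1 : 0 ≤ ∑ j ∈ S, w j * y j :=
    Finset.sum_nonneg fun j hj => mul_nonneg (hw j) (le_of_lt (hyS j hj).1)
  have h2 : -(∑ k ∈ Sᶜ, w k) ≤ ∑ k ∈ Sᶜ, w k * y k := by
    rw [← Finset.sum_neg_distrib]
    refine Finset.sum_le_sum fun k hk => ?_
    have hy := (hyNS k (Finset.mem_compl.mp hk)).1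
    nlinarith [hw k]
  have hd : (∑ k ∈ Sᶜ, w k) * (2 * (p + q)) < q :=
    (lt_div_iff₀ (by linarith)).mp hdiff
  nlinarith [hp0.le, hq0.le]
end

section
/- For the anti-coordinating coevolutionary model (ε = −1) with homogeneous parameters λ, β ∈ (0,1), α ≥ 0, and row-stochastic W, the state z* with x_i* = 1, y_i* = 1 for all i is a fixed point of the update rule in equation (11) (i.e., for every i, δ_i(z*) > 0, hence S(δ_i(z*)) = 1 and the opinion update returns 1) if and only if Σ_{j∈V} a_{ij} < 2(1−λ)β / ((1−β)(1+α)) for every i, where δ_i(z*) = −[λ(1−β)/2]·Σ_j a_{ij}(2+2α) + 2(1−λ)λβ·Σ_j w_{ij}. -/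
/-- For anti-coordinating agents, the all-ones state is a fixed
point of the update rule (i.e. `δ_i > 0` for every `i`) iff
`∑ j, a i j < 2(1-λ)β/((1-β)(1+α))` for every `i`. -/
theorem anticoordination_consensus_fixed_point_iff
    (n : ℕ) (A W : Fin n → Fin n → ℝ) (lam β α : ℝ)
    (hA : ∀ i j, 0 ≤ A i j) (hW : ∀ i j, 0 ≤ W i j)
    (hWrow : ∀ i, ∑ j, W i j = 1)
    (hlam : lam ∈ Set.Ioo (0 : ℝ) 1) (hβ : β ∈ Set.Ioo (0 : ℝ) 1) (hα : 0 ≤ α) :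
    (∀ i, 0 < -(lam * (1 - β) / 2) * ∑ j, A i j * (2 + 2 * α)
            + 2 * (1 - lam) * lam * β * ∑ j, W i j) ↔
    (∀ i, ∑ j, A i j < 2 * (1 - lam) * β / ((1 - β) * (1 + α))) := by
  obtain ⟨hl0, hl1⟩ := hlam
  obtain ⟨hb0, hb1⟩ := hβ
  have hc : 0 < (1 - β) * (1 + α) := by nlinarith
  apply forall_congr'
  intro i
  rw [hWrow i, ← Finset.sum_mul, lt_div_iff₀ hc]
  constructor <;> intro h <;> nlinarith [h]
end

section
/- Let λ, β ∈ (0,1) with β < 1/(2−λ), p = 2λβ(1−λ), q = 2λ(1−β) (so p < q). Suppose y_j ∈ (0,1] for j ∈ S, y_k ∈ [−1,0) for k ∉ S, W row-stochastic, and for a given i ∈ S: (1−2λ)/(1−λ) < Σ_{j∈S} w_{ij} < (1/2)(1 + p/(p−q)). Then the anti-coordination discriminant δ_i = p·[Σ_{j∈S} w_{ij} y_j + Σ_{k∉S} w_{ik} y_k] − (q/2)·[Σ_{j∈S} w_{ij} − Σ_{k∉S} w_{ik}] satisfies δ_i > 0. -/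
/-- Anti-coordination discriminant of an agent `i ∈ S` is
strictly positive under the polarization-invariance condition. -/
theorem anticoordination_discriminant_pos_in_S
    (n : ℕ) (w : Fin n → ℝ) (y : Fin n → ℝ) (S : Finset (Fin n)) (lam β : ℝ)
    (hlam : lam ∈ Set.Ioo (0 : ℝ) 1) (hβ : β ∈ Set.Ioo (0 : ℝ) 1)
    (hbl : β < 1 / (2 - lam))
    (hw : ∀ j, 0 ≤ w j) (hwsum : ∑ j, w j = 1)
    (hyS : ∀ j ∈ S, y j ∈ Set.Ioc (0 : ℝ) 1)
    (hyNS : ∀ k ∉ S, y k ∈ Set.Ico (-1 : ℝ) 0)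
    (hlo : (1 - 2 * lam) / (1 - lam) < ∑ j ∈ S, w j)
    (hhi : ∑ j ∈ S, w j < (1 / 2) * (1 + (2 * lam * β * (1 - lam)) /
      (2 * lam * β * (1 - lam) - 2 * lam * (1 - β)))) :
    0 < (2 * lam * β * (1 - lam)) *
          (∑ j ∈ S, w j * y j + ∑ k ∈ Sᶜ, w k * y k)
        - (2 * lam * (1 - β) / 2) * (∑ j ∈ S, w j - ∑ k ∈ Sᶜ, w k) := by
  obtain ⟨hl0, hl1⟩ := hlam
  obtain ⟨hb0, hb1⟩ := hβ
  set p : ℝ := 2 * lam * β * (1 - lam) with hp_def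
  set q : ℝ := 2 * lam * (1 - β) with hq_def
  have hp : 0 < p := by
    have : 0 < 1 - lam := by linarith
    positivity
  have hq : 0 < q := by
    have : 0 < 1 - β := by linarith
    positivity
  have h2l : 0 < 2 - lam := by linarith
  have hβ2 : β * (2 - lam) < 1 := by
    rw [div_eq_inv_mul, lt_inv_mul_iff₀ h2l] at hbl
    linarith [hbl]
  have hpq : p < q := by
    have : p - q = 2 * lam * (β * (2 - lam) - 1) := by ring
    nlinarith
  set s : ℝ := ∑ j ∈ S, w j with hs_def
  have hsc : ∑ k ∈ Sᶜ, w k = 1 - s := by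
    have h := Finset.sum_add_sum_compl S w
    rw [hwsum] at h
    linarith
  have hA : 0 ≤ ∑ j ∈ S, w j * y j := by
    apply Finset.sum_nonneg
    intro j hj
    exact mul_nonneg (hw j) (le_of_lt (hyS j hj).1)
  have hB : -(1 - s) ≤ ∑ k ∈ Sᶜ, w k * y k := by
    have : ∑ k ∈ Sᶜ, w k * (-1) ≤ ∑ k ∈ Sᶜ, w k * y k := by
      apply Finset.sum_le_sum
      intro k hk
      have hk' : k ∉ S := Finset.mem_compl.mp hk
      exact mul_le_mul_of_nonneg_left (hyNS k hk').1 (hw k)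
    calc -(1 - s) = ∑ k ∈ Sᶜ, w k * (-1) := by
            rw [← Finset.sum_mul, hsc]; ring
      _ ≤ _ := this
  have hd : p - q < 0 := by linarith
  clear_value p q s
  have hne : p - q ≠ 0 := hd.ne
  have h1 : (p - q) * s > (p - q) / 2 + p / 2 := by
    have h2 := mul_lt_mul_of_neg_left hhi hd
    have heq : (p - q) * ((1 / 2) * (1 + p / (p - q))) = (p - q) / 2 + p / 2 := by
      field_simp
    rw [heq] at h2
    exact h2
  nlinarith [mul_nonneg hp.le hA, mul_le_mul_of_nonneg_left hB hp.le]
end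

section
/- Let λ, β ∈ (0,1) with β < 1/(2−λ), p = 2λβ(1−λ), q = 2λ(1−β). Suppose y_j ∈ (0,1] for j ∈ S, y_k ∈ [−1,0) for k ∉ S, W row-stochastic, and for a given i ∉ S: (1−2λ)/(1−λ) < Σ_{k∉S} w_{ik} < (1/2)(1 + p/(p−q)). Then δ_i = p·[Σ_{j∈S} w_{ij} y_j + Σ_{k∉S} w_{ik} y_k] − (q/2)·[Σ_{j∈S} w_{ij} − Σ_{k∉S} w_{ik}] < 0. -/
/-- Anti-coordination discriminant of an agent `i ∉ S` is
strictly negative under the polarization-invariance condition. -/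
theorem anticoordination_discriminant_neg_outside_S
    (n : ℕ) (w : Fin n → ℝ) (y : Fin n → ℝ) (S : Finset (Fin n)) (lam β : ℝ)
    (hlam : lam ∈ Set.Ioo (0 : ℝ) 1) (hβ : β ∈ Set.Ioo (0 : ℝ) 1)
    (hbl : β < 1 / (2 - lam))
    (hw : ∀ j, 0 ≤ w j) (hwsum : ∑ j, w j = 1)
    (hyS : ∀ j ∈ S, y j ∈ Set.Ioc (0 : ℝ) 1)
    (hyNS : ∀ k ∉ S, y k ∈ Set.Ico (-1 : ℝ) 0)
    (hlo : (1 - 2 * lam) / (1 - lam) < ∑ k ∈ Sᶜ, w k)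
    (hhi : ∑ k ∈ Sᶜ, w k < (1 / 2) * (1 + (2 * lam * β * (1 - lam)) /
      (2 * lam * β * (1 - lam) - 2 * lam * (1 - β)))) :
    (2 * lam * β * (1 - lam)) *
          (∑ j ∈ S, w j * y j + ∑ k ∈ Sᶜ, w k * y k)
        - (2 * lam * (1 - β) / 2) * (∑ j ∈ S, w j - ∑ k ∈ Sᶜ, w k) < 0 := by
  obtain ⟨hl0, hl1⟩ := hlam
  obtain ⟨hb0, hb1⟩ := hβ
  set p : ℝ := 2 * lam * β * (1 - lam) with hp_def
  set q : ℝ := 2 * lam * (1 - β) with hq_def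
  set t : ℝ := ∑ k ∈ Sᶜ, w k with ht_def
  have h2l : (0:ℝ) < 2 - lam := by linarith
  have hbl' : β * (2 - lam) < 1 := by
    rw [lt_div_iff₀ h2l] at hbl; exact hbl
  have hp0 : 0 < p := by
    have : 0 < 1 - lam := by linarith
    positivity
  have hd : p - q < 0 := by
    have : p - q = 2 * lam * (β * (2 - lam) - 1) := by ring
    rw [this]
    have : β * (2 - lam) - 1 < 0 := by linarith
    nlinarith
  have hA : ∑ j ∈ S, w j * y j ≤ ∑ j ∈ S, w j := by
    apply Finset.sum_le_sum
    intro j hj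
    have := (hyS j hj).2
    nlinarith [hw j]
  have hB : ∑ k ∈ Sᶜ, w k * y k ≤ 0 := by
    apply Finset.sum_nonpos
    intro k hk
    have hk' : k ∉ S := Finset.mem_compl.mp hk
    have := (hyNS k hk').2
    exact mul_nonpos_of_nonneg_of_nonpos (hw k) (le_of_lt this)
  have hsplit : ∑ j ∈ S, w j + t = 1 := by
    rw [ht_def, Finset.sum_add_sum_compl, hwsum]
  have hdne : p - q ≠ 0 := ne_of_lt hd
  have key : t * (p - q) > ((1/2) * (1 + p / (p - q))) * (p - q) :=
    mul_lt_mul_of_neg_right hhi hd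
  have hsimp : ((1/2) * (1 + p / (p - q))) * (p - q) = ((p - q) + p) / 2 := by
    field_simp
  rw [hsimp] at key
  nlinarith [mul_le_mul_of_nonneg_left hB (le_of_lt hp0),
    mul_le_mul_of_nonneg_left hA (le_of_lt hp0)]
end

section
/- Consider the potential function Φ(z) = −Σ_i Σ_{j≠i} η·(a_{ij}/2)·[(1−x_j)(1−x_i) − (1+α)(1+x_j)(1+x_i)] − (1/2)·Σ_i Σ_j (w_{ij}/2)(y_i−y_j)² − (1/2)·Σ_k (λ/(1−λ))·(x_k − y_k)², with η = λ(1−β)/(4β(1−λ)), symmetric A and W, and homogeneous λ, β ∈ (0,1). For the anti-coordinating game (ε = −1) with payoffs (8), if a single agent i changes opinion y_i to y_i' (all else fixed) and f_i strictly increases, then Φ strictly increases. -/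
/-- Generalized ordinal potential property of `Φ` for
opinion deviations in the anti-coordinating game: a unilateral opinion change
that strictly increases `f_i` strictly increases `Φ`. -/
theorem potential_increases_on_opinion_deviation
    (n : ℕ) (A W : Fin n → Fin n → ℝ) (lam β α : ℝ)
    (hA : ∀ i j, 0 ≤ A i j) (hW : ∀ i j, 0 ≤ W i j)
    (hAsym : ∀ i j, A i j = A j i) (hWsym : ∀ i j, W i j = W j i)
    (hlam : lam ∈ Set.Ioo (0 : ℝ) 1) (hβ : β ∈ Set.Ioo (0 : ℝ) 1) (hα : 0 ≤ α)
    (Φ : (Fin n → ℝ) → (Fin n → ℝ) → ℝ)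
    (hΦ : ∀ x y : Fin n → ℝ, Φ x y =
      -(∑ i, ∑ j ∈ ({i} : Finset (Fin n))ᶜ,
          (lam * (1 - β) / (4 * β * (1 - lam))) * (A i j / 2) *
            ((1 - x j) * (1 - x i) - (1 + α) * (1 + x j) * (1 + x i)))
      - (1 / 2) * ∑ i, ∑ j, (W i j / 2) * (y i - y j) ^ 2
      - (1 / 2) * ∑ k, (lam / (1 - lam)) * (x k - y k) ^ 2)
    (f : Fin n → (Fin n → ℝ) → (Fin n → ℝ) → ℝ)
    (hfdef : ∀ (i : Fin n) (x y : Fin n → ℝ), f i x y =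
      -(lam * (1 - β) / 4) * ∑ j, A i j *
          ((1 - x i) * (1 - x j) + (1 + α) * (1 + x j) * (1 + x i))
      - (1 / 2) * (1 - lam) * β * ∑ j, W i j * (y i - y j) ^ 2
      - (1 / 2) * lam * β * (y i - x i) ^ 2)
    (i : Fin n) (x y : Fin n → ℝ) (yi' : ℝ)
    (hinc : f i x y < f i x (Function.update y i yi')) :
    Φ x y < Φ x (Function.update y i yi') := by
  obtain ⟨hl0, hl1⟩ := hlam
  obtain ⟨hb0, hb1⟩ := hβ
  have hl1' : (0:ℝ) < 1 - lam := by linarith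
  set y' := Function.update y i yi' with hy'
  have hy'i : y' i = yi' := Function.update_self i yi' y
  have hy'ne : ∀ k, k ≠ i → y' k = y k := fun k hk => Function.update_of_ne hk yi' y
  set F : Fin n → Fin n → ℝ :=
    fun p q => (W p q / 2) * ((y' p - y' q) ^ 2 - (y p - y q) ^ 2) with hF
  have hF0 : ∀ p q, p ≠ i → q ≠ i → F p q = 0 := by
    intro p q hp hq
    simp [hF, hy'ne p hp, hy'ne q hq]
  have hFsym : ∀ p q, F p q = F q p := by
    intro p q
    simp only [hF]
    rw [hWsym p q]
    ring
  have hFii : F i i = 0 := by simp [hF]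
  have inner : ∀ p, p ≠ i → ∑ q, F p q = F i p := by
    intro p hp
    rw [Finset.sum_eq_single i (fun q _ hq => hF0 p q hp hq)
      (fun h => absurd (Finset.mem_univ i) h)]
    exact hFsym p i
  have hsum : ∑ p, ∑ q, F p q = 2 * ∑ q, F i q := by
    rw [← Finset.add_sum_erase _ _ (Finset.mem_univ i)]
    have h2 : ∑ p ∈ Finset.univ.erase i, ∑ q, F p q
        = ∑ p ∈ Finset.univ.erase i, F i p := by
      refine Finset.sum_congr rfl fun p hp => inner p (Finset.ne_of_mem_erase hp)
    rw [h2]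
    have h3 : ∑ p ∈ Finset.univ.erase i, F i p = ∑ p, F i p - F i i := by
      rw [← Finset.add_sum_erase _ (fun p => F i p) (Finset.mem_univ i)]
      ring
    rw [h3, hFii]
    ring
  have hW' : (∑ p, ∑ q, (W p q / 2) * (y' p - y' q) ^ 2)
      - (∑ p, ∑ q, (W p q / 2) * (y p - y q) ^ 2) = 2 * ∑ q, F i q := by
    rw [← hsum, ← Finset.sum_sub_distrib]
    refine Finset.sum_congr rfl fun p _ => ?_
    rw [← Finset.sum_sub_distrib]
    refine Finset.sum_congr rfl fun q _ => ?_
    simp only [hF]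
    ring
  have hSL : (∑ k, (lam / (1 - lam)) * (x k - y' k) ^ 2)
      - (∑ k, (lam / (1 - lam)) * (x k - y k) ^ 2)
      = (lam / (1 - lam)) * ((x i - yi') ^ 2 - (x i - y i) ^ 2) := by
    rw [← Finset.sum_sub_distrib]
    rw [Finset.sum_eq_single i (fun k _ hk => by rw [hy'ne k hk]; ring)
      (fun h => absurd (Finset.mem_univ i) h)]
    rw [hy'i]
    ring
  have hΦdiff : Φ x y' - Φ x y =
      -(1/2) * (2 * ∑ q, F i q)
      - (1/2) * ((lam / (1 - lam)) * ((x i - yi') ^ 2 - (x i - y i) ^ 2)) := by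
    rw [hΦ x y', hΦ x y]
    linarith [hW', hSL]
  have hfW : (∑ j, W i j * (y' i - y' j) ^ 2) - (∑ j, W i j * (y i - y j) ^ 2)
      = 2 * ∑ q, F i q := by
    rw [← Finset.sum_sub_distrib, Finset.mul_sum]
    refine Finset.sum_congr rfl fun q _ => ?_
    simp only [hF]
    ring
  have hfdiff : f i x y' - f i x y =
      -(1/2) * (1 - lam) * β * (2 * ∑ q, F i q)
      - (1/2) * lam * β * ((y' i - x i) ^ 2 - (y i - x i) ^ 2) := by
    rw [hfdef i x y', hfdef i x y]
    linear_combination (-(1 / 2) * (1 - lam) * β) * hfW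
  have hD : (y' i - x i) ^ 2 - (y i - x i) ^ 2
      = (x i - yi') ^ 2 - (x i - y i) ^ 2 := by
    rw [hy'i]; ring
  have key : Φ x y' - Φ x y = (1 / ((1 - lam) * β)) * (f i x y' - f i x y) := by
    rw [hΦdiff, hfdiff, hD]
    field_simp
  have hpos : 0 < 1 / ((1 - lam) * β) := by positivity
  have : 0 < (1 / ((1 - lam) * β)) * (f i x y' - f i x y) :=
    mul_pos hpos (by linarith)
  linarith [key, this]
end
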